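/- For 0 < q < p ≤ 1, n ∈ ℕ and real x, y, the (p,q)-power (x+y)_{p,q}^n := ∏_{s=0}^{n-1}(p^s x + q^s y) admits the binomial expansion (x+y)_{p,q}^n = Σ_{k=0}^{n} [n choose k]_{p,q} · q^{k(k-1)/2} · p^{(n-k)(n-k-1)/2} · x^{n-k} y^{k}. -/

import Mathlib

noncomputable section

/-- The (p,q)-integer [n]_{p,q} = (p^n - q^n)/(p-q). -/
def pqInt (p q : ℝ) (n : ℕ) : ℝ := (p ^ n - q ^ n) / (p - q)

/-- The (p,q)-factorial [n]_{p,q}! = ∏_{j=1}^n [j]_{p,q}. -/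
def pqFact (p q : ℝ) (n : ℕ) : ℝ := ∏ j ∈ Finset.range n, pqInt p q (j + 1)

/-- The (p,q)-binomial coefficient. -/
def pqBinom (p q : ℝ) (n k : ℕ) : ℝ := pqFact p q n / (pqFact p q k * pqFact p q (n - k))

/-- The (p,q)-power (x+y)_{p,q}^n = ∏_{s=0}^{n-1} (p^s x + q^s y). -/
def pqPow (p q x y : ℝ) (n : ℕ) : ℝ := ∏ s ∈ Finset.range n, (p ^ s * x + q ^ s * y)

/-- The (p,q)-Bernstein basis b_{n,k}^{(p,q)}(x). -/
def pqBernstein (p q : ℝ) (n k : ℕ) (x : ℝ) : ℝ :=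
  pqBinom p q n k * x ^ k * ∏ s ∈ Finset.range (n - k), (p ^ s - q ^ s * x)

/-- The (p,q)-integral of f over [0,1] (case p > q). -/
def pqIntegral01 (p q : ℝ) (f : ℝ → ℝ) : ℝ :=
  (p - q) * ∑' j : ℕ, (q ^ j / p ^ (j + 1)) * f (q ^ j / p ^ (j + 1))

/-- The (p,q)-Bernstein-Schurer-Kantorovich operator K_{n,ℓ}^{(p,q)}(f;x). -/
def pqBSK (p q : ℝ) (n l : ℕ) (f : ℝ → ℝ) (x : ℝ) : ℝ :=
  ∑ k ∈ Finset.range (n + l + 1), pqBernstein p q (n + l) k x *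
    pqIntegral01 p q (fun t => f (pqInt p q k / pqInt p q (n + 1) +
      (pqInt p q (k + 1) - pqInt p q k) / pqInt p q (n + 1) * t))

/-- (px + 1 - x)_{p,q}^m = ∏_{s=0}^{m-1} (p^{s+1} x + q^s (1-x)). -/
def pqShiftPow (p q x : ℝ) (m : ℕ) : ℝ :=
  ∏ s ∈ Finset.range m, (p ^ (s + 1) * x + q ^ s * (1 - x))

/-- The modulus of continuity of f on [0,a]. -/
def modulus (f : ℝ → ℝ) (a δ : ℝ) : ℝ :=
  sSup {d | ∃ x ∈ Set.Icc (0:ℝ) a, ∃ y ∈ Set.Icc (0:ℝ) a, |x - y| ≤ δ ∧ d = |f x - f y|}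

lemma pqInt_pos {p q : ℝ} (hq : 0 < q) (hqp : q < p) (n : ℕ) (hn : n ≠ 0) : 0 < pqInt p q n := by
  have : q ^ n < p ^ n := pow_lt_pow_left₀ hqp hq.le hn
  exact div_pos (by linarith) (by linarith)

lemma pqFact_pos {p q : ℝ} (hq : 0 < q) (hqp : q < p) (n : ℕ) : 0 < pqFact p q n :=
  Finset.prod_pos fun j _ => pqInt_pos hq hqp (j+1) (Nat.succ_ne_zero j)

lemma pqInt_rec {p q : ℝ} (hqp : q < p) (n k : ℕ) (hk : k ≤ n + 1) :
    pqInt p q (n+1) = p ^ k * pqInt p q (n+1-k) + q ^ (n+1-k) * pqInt p q k := by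
  have hpq : p - q ≠ 0 := by linarith
  have h1 : p ^ k * p ^ (n+1-k) = p ^ (n+1) := by rw [← pow_add]; congr 1; omega
  have h2 : q ^ k * q ^ (n+1-k) = q ^ (n+1) := by rw [← pow_add]; congr 1; omega
  have key : p^(n+1) - q^(n+1) = p^k*(p^(n+1-k) - q^(n+1-k)) + q^(n+1-k)*(p^k - q^k) := by
    linear_combination h2 - h1
  unfold pqInt
  rw [key]
  ring

lemma pqBinom_pascal {p q : ℝ} (hq : 0 < q) (hqp : q < p) (n k : ℕ) (hk1 : 1 ≤ k) (hk2 : k ≤ n) :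
    pqBinom p q (n+1) k = p ^ k * pqBinom p q n k + q ^ (n+1-k) * pqBinom p q n (k-1) := by
  have fact_succ : ∀ m, pqFact p q (m+1) = pqFact p q m * pqInt p q (m+1) :=
    fun m => Finset.prod_range_succ _ _
  have hI1 : pqInt p q (n+1-k) ≠ 0 := (pqInt_pos hq hqp _ (by omega)).ne'
  have hI2 : pqInt p q k ≠ 0 := (pqInt_pos hq hqp _ (by omega)).ne'
  have hF : ∀ m, pqFact p q m ≠ 0 := fun m => (pqFact_pos hq hqp m).ne'
  have e1 : pqFact p q (n+1-k) = pqFact p q (n-k) * pqInt p q (n+1-k) := by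
    have h : n+1-k = (n-k)+1 := by omega
    rw [h, fact_succ]
  have e2 : pqFact p q k = pqFact p q (k-1) * pqInt p q k := by
    have h : k = (k-1)+1 := by omega
    conv_lhs => rw [h]
    rw [fact_succ, ← h]
  have e3 : pqFact p q (n-(k-1)) = pqFact p q (n-k) * pqInt p q (n+1-k) := by
    have h : n-(k-1) = (n-k)+1 := by omega
    have h2 : n+1-k = (n-k)+1 := by omega
    rw [h, fact_succ, ← h2]
  unfold pqBinom
  rw [fact_succ n, pqInt_rec hqp n k (by omega), e1, e3, e2]
  set A := pqInt p q k with hA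
  set B := pqInt p q (n+1-k) with hB
  set a := pqFact p q (k-1) with ha
  set b := pqFact p q (n-k) with hb
  set F := pqFact p q n with hFn
  have ha' : a ≠ 0 := hF _
  have hb' : b ≠ 0 := hF _
  field_simp

lemma Tsucc (k : ℕ) : (k+1)*k/2 = k*(k-1)/2 + k := by
  have h : (k+1)*k = k*(k-1) + k*2 := by
    cases k with
    | zero => rfl
    | succ k => simp [Nat.succ_sub_one]; ring
  rw [h, Nat.add_mul_div_right _ _ (by norm_num : (0:ℕ) < 2)]

lemma pqBinom_zero {p q : ℝ} (hq : 0 < q) (hqp : q < p) (m : ℕ) : pqBinom p q m 0 = 1 := by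
  unfold pqBinom
  rw [Nat.sub_zero]
  have h0 : pqFact p q 0 = 1 := by simp [pqFact]
  rw [h0, one_mul, div_self (pqFact_pos hq hqp m).ne']

lemma pqBinom_self {p q : ℝ} (hq : 0 < q) (hqp : q < p) (m : ℕ) : pqBinom p q m m = 1 := by
  unfold pqBinom
  rw [Nat.sub_self]
  have h0 : pqFact p q 0 = 1 := by simp [pqFact]
  rw [h0, mul_one, div_self (pqFact_pos hq hqp m).ne']

def coef (p q x y : ℝ) (n k : ℕ) : ℝ :=
  pqBinom p q n k * q ^ (k * (k - 1) / 2) * p ^ ((n - k) * (n - k - 1) / 2) * x ^ (n - k) * y ^ k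

lemma coef_step {p q : ℝ} (hq : 0 < q) (hqp : q < p) (x y : ℝ) (n k : ℕ) (hk : k < n) :
    coef p q x y (n+1) (k+1) =
      coef p q x y n (k+1) * (p ^ n * x) + coef p q x y n k * (q ^ n * y) := by
  obtain ⟨m, rfl⟩ : ∃ m, n = k + 1 + m := ⟨n - k - 1, by omega⟩
  unfold coef
  rw [pqBinom_pascal hq hqp (k+1+m) (k+1) (by omega) (by omega)]
  rw [show k+1+m+1-(k+1) = m+1 by omega, show k+1+m-(k+1) = m by omega,
      show k+1+m-k = m+1 by omega, Nat.add_sub_cancel, Nat.add_sub_cancel,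
      Tsucc k, Tsucc m]
  ring

lemma coef_zero {p q : ℝ} (hq : 0 < q) (hqp : q < p) (x y : ℝ) (n : ℕ) :
    coef p q x y (n+1) 0 = coef p q x y n 0 * (p ^ n * x) := by
  unfold coef
  rw [pqBinom_zero hq hqp, pqBinom_zero hq hqp, Nat.sub_zero, Nat.sub_zero, Nat.add_sub_cancel, Tsucc n]
  ring

lemma coef_last {p q : ℝ} (hq : 0 < q) (hqp : q < p) (x y : ℝ) (n : ℕ) :
    coef p q x y (n+1) (n+1) = coef p q x y n n * (q ^ n * y) := by
  unfold coef
  rw [pqBinom_self hq hqp, pqBinom_self hq hqp, Nat.sub_self, Nat.sub_self, Nat.add_sub_cancel, Tsucc n]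
  ring


lemma expansion {p q : ℝ} (hq : 0 < q) (hqp : q < p) (x y : ℝ) (n : ℕ) :
    pqPow p q x y n = ∑ k ∈ Finset.range (n + 1), coef p q x y n k := by
  induction n with
  | zero => simp [pqPow, coef, pqBinom_self hq hqp]
  | succ n ih =>
    rw [pqPow, Finset.prod_range_succ, ← pqPow, ih, Finset.sum_mul]
    simp only [mul_add]
    rw [Finset.sum_add_distrib]
    conv_lhs =>
      rw [Finset.sum_range_succ' (fun k => coef p q x y n k * (p ^ n * x)) n]
      rw [Finset.sum_range_succ (fun k => coef p q x y n k * (q ^ n * y)) n]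
    rw [Finset.sum_range_succ' (fun k => coef p q x y (n+1) k) (n+1)]
    rw [Finset.sum_range_succ (fun k => coef p q x y (n+1) (k+1)) n]
    rw [coef_zero hq hqp, coef_last hq hqp]
    have hmid : ∑ k ∈ Finset.range n, coef p q x y (n+1) (k+1) =
        ∑ k ∈ Finset.range n,
          (coef p q x y n (k+1) * (p ^ n * x) + coef p q x y n k * (q ^ n * y)) :=
      Finset.sum_congr rfl fun k hk => coef_step hq hqp x y n k (Finset.mem_range.mp hk)
    rw [hmid, Finset.sum_add_distrib]
    ring


theorem stmt4 (p q : ℝ) (hq : 0 < q) (hqp : q < p) (hp : p ≤ 1) (n : ℕ) (x y : ℝ) :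
    pqPow p q x y n =
      ∑ k ∈ Finset.range (n + 1), pqBinom p q n k *
        q ^ (k * (k - 1) / 2) * p ^ ((n - k) * (n - k - 1) / 2) * x ^ (n - k) * y ^ k := by
  rw [expansion hq hqp x y n]
  rfl
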